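/- Let S₁ ⊆ ℝ^{m₁×n}, S₂ ⊆ ℝ^{m₂×n} be linear subspaces and P₁₂ ∈ ℝ^{n×m₁}, P₁₃ ∈ ℝ^{n×m₂}. Define S = S₁ × S₂ viewed as block matrices [K₁; K₂] ∈ ℝ^{(m₁+m₂)×n} and P = [P₁₂ P₁₃] ∈ ℝ^{n×(m₁+m₂)}. Then S is quadratically invariant under P if and only if for all (K₁,K₂) ∈ S₁ × S₂: K₁P₁₂K₁ ∈ S₁, K₁P₁₃K₂ ∈ S₁, K₂P₁₂K₁ ∈ S₂, and K₂P₁₃K₂ ∈ S₂. -/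

import Mathlib

lemma mqi_key {m₁ m₂ n : ℕ} (K₁ : Matrix (Fin m₁) (Fin n) ℝ)
    (K₂ : Matrix (Fin m₂) (Fin n) ℝ) (P₁₂ : Matrix (Fin n) (Fin m₁) ℝ)
    (P₁₃ : Matrix (Fin n) (Fin m₂) ℝ) :
    (Matrix.fromRows K₁ K₂ * Matrix.fromCols P₁₂ P₁₃ * Matrix.fromRows K₁ K₂).toRows₁
      = K₁ * P₁₂ * K₁ + K₁ * P₁₃ * K₂ ∧
    (Matrix.fromRows K₁ K₂ * Matrix.fromCols P₁₂ P₁₃ * Matrix.fromRows K₁ K₂).toRows₂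
      = K₂ * P₁₂ * K₁ + K₂ * P₁₃ * K₂ := by
  rw [Matrix.mul_assoc, Matrix.fromCols_mul_fromRows, Matrix.fromRows_mul,
    Matrix.toRows₁_fromRows, Matrix.toRows₂_fromRows]
  simp [Matrix.mul_add, Matrix.mul_assoc]

theorem mutual_quadratic_invariance_iff {m₁ m₂ n : ℕ}
    (S₁ : Submodule ℝ (Matrix (Fin m₁) (Fin n) ℝ))
    (S₂ : Submodule ℝ (Matrix (Fin m₂) (Fin n) ℝ))
    (P₁₂ : Matrix (Fin n) (Fin m₁) ℝ) (P₁₃ : Matrix (Fin n) (Fin m₂) ℝ) :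
    (∀ K₁ ∈ S₁, ∀ K₂ ∈ S₂,
        (Matrix.fromRows K₁ K₂ * Matrix.fromCols P₁₂ P₁₃ *
          Matrix.fromRows K₁ K₂).toRows₁ ∈ S₁ ∧
        (Matrix.fromRows K₁ K₂ * Matrix.fromCols P₁₂ P₁₃ *
          Matrix.fromRows K₁ K₂).toRows₂ ∈ S₂) ↔
    (∀ K₁ ∈ S₁, ∀ K₂ ∈ S₂,
        K₁ * P₁₂ * K₁ ∈ S₁ ∧ K₁ * P₁₃ * K₂ ∈ S₁ ∧
        K₂ * P₁₂ * K₁ ∈ S₂ ∧ K₂ * P₁₃ * K₂ ∈ S₂) := by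
  constructor
  · intro h K₁ h₁ K₂ h₂
    have hz₂ := h K₁ h₁ 0 S₂.zero_mem
    have hz₁ := h 0 S₁.zero_mem K₂ h₂
    have hb := h K₁ h₁ K₂ h₂
    rw [(mqi_key K₁ 0 P₁₂ P₁₃).1, (mqi_key K₁ 0 P₁₂ P₁₃).2] at hz₂
    rw [(mqi_key 0 K₂ P₁₂ P₁₃).1, (mqi_key 0 K₂ P₁₂ P₁₃).2] at hz₁
    rw [(mqi_key K₁ K₂ P₁₂ P₁₃).1, (mqi_key K₁ K₂ P₁₂ P₁₃).2] at hb
    simp only [Matrix.mul_zero, Matrix.zero_mul, add_zero, zero_add] at hz₁ hz₂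
    refine ⟨hz₂.1, ?_, ?_, hz₁.2⟩
    · have := S₁.sub_mem hb.1 hz₂.1; simpa using this
    · have := S₂.sub_mem hb.2 hz₁.2; simpa using this
  · intro h K₁ h₁ K₂ h₂
    obtain ⟨a, b, c, d⟩ := h K₁ h₁ K₂ h₂
    rw [(mqi_key K₁ K₂ P₁₂ P₁₃).1, (mqi_key K₁ K₂ P₁₂ P₁₃).2]
    exact ⟨S₁.add_mem a b, S₂.add_mem c d⟩
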